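/- Upper bound on the shift. Let f, g ∈ Ψ be (0,1)-interpolating, let ω be an averaging kernel with cumulative function Ω(x) = ∫_{−∞}^x ω(y) dy and right-continuous generalized inverse Ω⁻¹(p+) = sup{x : Ω(x) ≤ p}, let α ∈ ℝ, and let (hf, hg) ∈ 𝒳² be such that (f, g) is a consistent travelling-wave solution with shift α. If (u, v) ∈ [0,1]² satisfies v < hf(u−) and u < hg(v−), then α ≤ Ω⁻¹((v/hf(u−))+) + Ω⁻¹((u/hg(v−))+). If (u, v) ∈ [0,1]² satisfies v > hf(u+) and u > hg(v+), then −α ≤ Ω⁻¹(((1−v)/(1−hf(u+)))+) + Ω⁻¹(((1−u)/(1−hg(v+)))+). -/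

import Mathlib

open MeasureTheory Filter Set

noncomputable section

/-- Convolution `(f ⊗ ω)(x) = ∫ y, f y · ω (x − y)`. -/
def conv (f ω : ℝ → ℝ) (x : ℝ) : ℝ := ∫ y : ℝ, f y * ω (x - y)

/-- `ω` is an averaging kernel: even, nonnegative, of bounded variation, integrating to 1. -/
def IsAveragingKernel (ω : ℝ → ℝ) : Prop :=
  (∀ x, ω (-x) = ω x) ∧ (∀ x, 0 ≤ ω x) ∧ BoundedVariationOn ω Set.univ ∧
    MeasureTheory.Integrable ω ∧ (∫ x : ℝ, ω x) = 1

/-- The essential supremum `‖ω‖∞` of a kernel, as a real number. -/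
def kerSup (ω : ℝ → ℝ) : ℝ := (eLpNorm ω ⊤ MeasureTheory.volume).toReal

/-- `ω` is regular: for some `W ∈ (0,∞]`, it vanishes outside `[−W, W]` and is
positive on `(−W, W)` (the case `W = ∞` being that `ω` is everywhere positive). -/
def IsRegularKernel (ω : ℝ → ℝ) : Prop :=
  (∀ x, 0 < ω x) ∨
    ∃ W : ℝ, 0 < W ∧ (∀ x, W < |x| → ω x = 0) ∧ (∀ x, |x| < W → 0 < ω x)

/-- Membership in `𝒳`: nondecreasing self-maps of `[0,1]`. -/
def MemX (h : ℝ → ℝ) : Prop :=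
  MonotoneOn h (Icc 0 1) ∧ MapsTo h (Icc 0 1) (Icc 0 1)

/-- Left limit `h(u−)` of `h ∈ 𝒳` at `u ∈ [0,1]`, with the convention `h(0−) = 0`. -/
def lm (h : ℝ → ℝ) (u : ℝ) : ℝ := if u ≤ 0 then 0 else sSup (h '' Ico 0 u)

/-- Right limit `h(u+)` of `h ∈ 𝒳` at `u ∈ [0,1]`, with the convention `h(1+) = 1`. -/
def rm (h : ℝ → ℝ) (u : ℝ) : ℝ := if 1 ≤ u then 1 else sInf (h '' Ioc u 1)

/-- A canonical generalized inverse of `h ∈ 𝒳` (any valid inverse has the same integrals,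
so the potential below is unambiguous). -/
def Xinv (h : ℝ → ℝ) (v : ℝ) : ℝ := sInf ({1} ∪ {u ∈ Icc (0:ℝ) 1 | v ≤ h u})

/-- The potential `Φ(hf, hg; u, v) = ∫₀ᵘ hg⁻¹ + ∫₀ᵛ hf⁻¹ − u·v`. -/
def Pot (hf hg : ℝ → ℝ) (u v : ℝ) : ℝ :=
  (∫ x in (0:ℝ)..u, Xinv hg x) + (∫ x in (0:ℝ)..v, Xinv hf x) - u * v

/-- `A(hf, hg) = Φ(hf, hg; 1, 1)`. -/
def Agap (hf hg : ℝ → ℝ) : ℝ := Pot hf hg 1 1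

/-- `(u,v)` is a crossing point of `(hf, hg)`:
`u ∈ [hg(v−), hg(v+)]` and `v ∈ [hf(u−), hf(u+)]`. -/
def IsCrossing (hf hg : ℝ → ℝ) (u v : ℝ) : Prop :=
  u ∈ Icc (0:ℝ) 1 ∧ v ∈ Icc (0:ℝ) 1 ∧
    u ∈ Icc (lm hg v) (rm hg v) ∧ v ∈ Icc (lm hf u) (rm hf u)

/-- The strictly positive gap condition: there is a nontrivial crossing point, and every
nontrivial crossing point satisfies `Φ(hf, hg; u, v) > max {0, A(hf, hg)}`. -/
def StrictPosGap (hf hg : ℝ → ℝ) : Prop :=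
  (∃ u v, IsCrossing hf hg u v ∧ ¬(u = 0 ∧ v = 0) ∧ ¬(u = 1 ∧ v = 1)) ∧
    ∀ u v, IsCrossing hf hg u v → ¬(u = 0 ∧ v = 0) → ¬(u = 1 ∧ v = 1) →
      max 0 (Agap hf hg) < Pot hf hg u v

/-- Membership in `Ψ`: nondecreasing functions `ℝ → [0,1]`. -/
def MemPsi (f : ℝ → ℝ) : Prop := Monotone f ∧ ∀ x, f x ∈ Icc (0:ℝ) 1

/-- `f` is `(a,b)`-interpolating: limits `a` at `−∞` and `b` at `+∞`. -/
def Interpolates (f : ℝ → ℝ) (a b : ℝ) : Prop :=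
  Filter.Tendsto f Filter.atBot (nhds a) ∧ Filter.Tendsto f Filter.atTop (nhds b)

/-- `(f, g)` is a consistent travelling-wave solution with shift `α` for `(hf, hg)`
and kernel `ω`. -/
def ConsistentWave (hf hg f g ω : ℝ → ℝ) (α : ℝ) : Prop :=
  (∀ x, f x ∈ Icc (lm hf (conv g ω (x + α))) (rm hf (conv g ω (x + α)))) ∧
    (∀ x, g x ∈ Icc (lm hg (conv f ω x)) (rm hg (conv f ω x)))

/-- `Ω(x) = ∫_{−∞}^x ω(y) dy`. -/
def Omg (ω : ℝ → ℝ) (x : ℝ) : ℝ := ∫ y in Iio x, ω y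

/-- The right-continuous generalized inverse `Ω⁻¹(p+) = sup {x : Ω(x) ≤ p}`. -/
def OmgInv (ω : ℝ → ℝ) (p : ℝ) : ℝ := sSup {x | Omg ω x ≤ p}


section AuxProof

open MeasureTheory Filter Set

lemma ker_int {ω : ℝ → ℝ} (hω : IsAveragingKernel ω) : Integrable ω := hω.2.2.2.1

lemma ker_nn {ω : ℝ → ℝ} (hω : IsAveragingKernel ω) : ∀ x, 0 ≤ ω x := hω.2.1

lemma ker_total {ω : ℝ → ℝ} (hω : IsAveragingKernel ω) : (∫ x : ℝ, ω x) = 1 := hω.2.2.2.2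

lemma integrable_mul_ker {ω f : ℝ → ℝ} (hω : IsAveragingKernel ω) (hf : Monotone f)
    (hf01 : ∀ x, f x ∈ Icc (0:ℝ) 1) (x : ℝ) :
    Integrable (fun y => f y * ω (x - y)) := by
  refine Integrable.bdd_mul ((ker_int hω).comp_sub_left x)
    hf.measurable.aestronglyMeasurable (c := 1) (ae_of_all _ fun y => ?_)
  rw [Real.norm_eq_abs, abs_of_nonneg (hf01 y).1]
  exact (hf01 y).2

lemma integrable_mul_ker' {ω f : ℝ → ℝ} (hω : IsAveragingKernel ω) (hf : Monotone f)
    (hf01 : ∀ x, f x ∈ Icc (0:ℝ) 1) (x : ℝ) :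
    Integrable (fun t => f (x - t) * ω t) := by
  refine Integrable.bdd_mul (ker_int hω)
    ((hf.measurable.comp (measurable_const.sub measurable_id)).aestronglyMeasurable)
    (c := 1) (ae_of_all _ fun t => ?_)
  rw [Real.norm_eq_abs, abs_of_nonneg (hf01 _).1]
  exact (hf01 _).2

lemma conv_eq (f ω : ℝ → ℝ) (x : ℝ) : conv f ω x = ∫ t : ℝ, f (x - t) * ω t := by
  unfold conv
  rw [← integral_sub_left_eq_self (fun y => f y * ω (x - y)) volume x]
  congr 1
  funext t
  simp

lemma conv_nonneg' {ω f : ℝ → ℝ} (hω : IsAveragingKernel ω)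
    (hf01 : ∀ x, f x ∈ Icc (0:ℝ) 1) (x : ℝ) : 0 ≤ conv f ω x :=
  integral_nonneg fun y => mul_nonneg (hf01 y).1 (ker_nn hω _)

lemma conv_le_one {ω f : ℝ → ℝ} (hω : IsAveragingKernel ω) (hf : Monotone f)
    (hf01 : ∀ x, f x ∈ Icc (0:ℝ) 1) (x : ℝ) : conv f ω x ≤ 1 := by
  have h1 : conv f ω x ≤ ∫ y : ℝ, ω (x - y) := by
    refine integral_mono (integrable_mul_ker hω hf hf01 x) ((ker_int hω).comp_sub_left x)
      (fun y => ?_)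
    exact mul_le_of_le_one_left (ker_nn hω _) (hf01 y).2
  rwa [integral_sub_left_eq_self ω volume x, ker_total hω] at h1

lemma conv_mono {ω f : ℝ → ℝ} (hω : IsAveragingKernel ω) (hf : Monotone f)
    (hf01 : ∀ x, f x ∈ Icc (0:ℝ) 1) : Monotone (conv f ω) := by
  intro x₁ x₂ h
  rw [conv_eq, conv_eq]
  exact integral_mono (integrable_mul_ker' hω hf hf01 x₁) (integrable_mul_ker' hω hf hf01 x₂)
    (fun t => mul_le_mul_of_nonneg_right (hf (by linarith : x₁ - t ≤ x₂ - t)) (ker_nn hω t))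

lemma conv_ge {ω g : ℝ → ℝ} (hω : IsAveragingKernel ω) (hg : Monotone g)
    (hg01 : ∀ x, g x ∈ Icc (0:ℝ) 1) (s c : ℝ) (hc : 0 ≤ c)
    (hs : ∀ x, s < x → c ≤ g x) (y : ℝ) :
    c * Omg ω (y - s) ≤ conv g ω y := by
  rw [conv_eq]
  have hint : Integrable ((Iio (y - s)).indicator (fun t => c * ω t)) :=
    ((ker_int hω).const_mul c).indicator measurableSet_Iio
  have h1 : (∫ t : ℝ, (Iio (y - s)).indicator (fun t => c * ω t) t) = c * Omg ω (y - s) := by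
    rw [integral_indicator measurableSet_Iio, Omg, integral_const_mul]
  rw [← h1]
  refine integral_mono hint (integrable_mul_ker' hω hg hg01 y) (fun t => ?_)
  by_cases ht : t ∈ Iio (y - s)
  · rw [indicator_of_mem ht]
    have : s < y - t := by have := ht; simp only [mem_Iio] at this; linarith
    exact mul_le_mul_of_nonneg_right (hs _ this) (ker_nn hω t)
  · rw [indicator_of_notMem ht]
    exact mul_nonneg (hg01 _).1 (ker_nn hω t)

lemma omg_mono {ω : ℝ → ℝ} (hω : IsAveragingKernel ω) : Monotone (Omg ω) := by
  intro x₁ x₂ h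
  exact setIntegral_mono_set (ker_int hω).integrableOn
    (Eventually.of_forall fun t => ker_nn hω t) ((Iio_subset_Iio h).eventuallyLE)

lemma omg_tendsto {ω : ℝ → ℝ} (hω : IsAveragingKernel ω) :
    Tendsto (Omg ω) atTop (nhds 1) := by
  have h := tendsto_setIntegral_of_monotone (μ := volume) (s := fun r : ℝ => Iio r)
    (fun i => measurableSet_Iio) (fun i j hij => Iio_subset_Iio hij)
    (by rw [iUnion_Iio]; exact (ker_int hω).integrableOn)
  rw [iUnion_Iio] at h
  simp only [Measure.restrict_univ] at h
  rw [ker_total hω] at h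
  exact h

lemma omgInv_lt {ω : ℝ → ℝ} (hω : IsAveragingKernel ω) {p t : ℝ} (hp : p < 1)
    (ht : OmgInv ω p < t) : p < Omg ω t := by
  by_contra h
  push_neg at h
  have hbdd : BddAbove {x | Omg ω x ≤ p} := by
    obtain ⟨t₀, ht₀⟩ := ((omg_tendsto hω).eventually (eventually_gt_nhds hp)).exists
    refine ⟨t₀, fun x hx => ?_⟩
    by_contra hxt
    push_neg at hxt
    exact absurd (le_trans (omg_mono hω hxt.le) hx) (not_le.mpr ht₀)
  exact absurd (le_csSup hbdd h) (not_le.mpr ht)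

lemma conv_tendsto_atTop {ω f : ℝ → ℝ} (hω : IsAveragingKernel ω) (hf : Monotone f)
    (hf01 : ∀ x, f x ∈ Icc (0:ℝ) 1) (hlim : Tendsto f atTop (nhds 1)) :
    Tendsto (conv f ω) atTop (nhds 1) := by
  have h := tendsto_integral_filter_of_dominated_convergence (μ := volume)
    (F := fun x t => f (x - t) * ω t) (f := ω) ω
    (Eventually.of_forall fun x => (integrable_mul_ker' hω hf hf01 x).aestronglyMeasurable)
    (Eventually.of_forall fun x => Eventually.of_forall fun t => by
      rw [Real.norm_eq_abs, abs_of_nonneg (mul_nonneg (hf01 _).1 (ker_nn hω t))]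
      exact mul_le_of_le_one_left (ker_nn hω t) (hf01 _).2)
    (ker_int hω)
    (Eventually.of_forall fun t => by
      have h1 : Tendsto (fun x : ℝ => f (x - t)) atTop (nhds 1) := by
        refine hlim.comp ?_
        exact tendsto_atTop_add_const_right atTop (-t) tendsto_id
      have h2 := h1.mul_const (ω t)
      rw [one_mul] at h2
      exact h2)
  rw [ker_total hω] at h
  have : conv f ω = fun x => ∫ t : ℝ, f (x - t) * ω t := funext fun x => conv_eq f ω x
  rw [this]
  exact h

lemma conv_tendsto_atBot {ω f : ℝ → ℝ} (hω : IsAveragingKernel ω) (hf : Monotone f)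
    (hf01 : ∀ x, f x ∈ Icc (0:ℝ) 1) (hlim : Tendsto f atBot (nhds 0)) :
    Tendsto (conv f ω) atBot (nhds 0) := by
  have h := tendsto_integral_filter_of_dominated_convergence (μ := volume)
    (F := fun x t => f (x - t) * ω t) (f := fun _ => (0:ℝ)) ω
    (Eventually.of_forall fun x => (integrable_mul_ker' hω hf hf01 x).aestronglyMeasurable)
    (Eventually.of_forall fun x => Eventually.of_forall fun t => by
      rw [Real.norm_eq_abs, abs_of_nonneg (mul_nonneg (hf01 _).1 (ker_nn hω t))]
      exact mul_le_of_le_one_left (ker_nn hω t) (hf01 _).2)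
    (ker_int hω)
    (Eventually.of_forall fun t => by
      have h1 : Tendsto (fun x : ℝ => f (x - t)) atBot (nhds 0) := by
        refine hlim.comp ?_
        exact tendsto_atBot_add_const_right atBot (-t) tendsto_id
      have h2 := h1.mul_const (ω t)
      rw [zero_mul] at h2
      exact h2)
  rw [integral_zero] at h
  have : conv f ω = fun x => ∫ t : ℝ, f (x - t) * ω t := funext fun x => conv_eq f ω x
  rw [this]
  exact h

lemma core_shift {ω f g : ℝ → ℝ} {α u v a b : ℝ}
    (hω : IsAveragingKernel ω)
    (hf : Monotone f) (hf01 : ∀ x, f x ∈ Icc (0:ℝ) 1)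
    (hg : Monotone g) (hg01 : ∀ x, g x ∈ Icc (0:ℝ) 1)
    (hf0 : Tendsto f atBot (nhds 0)) (hf1 : Tendsto f atTop (nhds 1))
    (hv : 0 < v) (hva : v < a) (ha1 : a ≤ 1)
    (hu : 0 ≤ u) (hub : u < b)
    (hcons1 : ∀ x, v ≤ conv f ω x → b ≤ g x)
    (hcons2 : ∀ x, u ≤ conv g ω (x + α) → a ≤ f x) :
    α ≤ OmgInv ω (v / a) + OmgInv ω (u / b) := by
  have hb0 : 0 < b := lt_of_le_of_lt hu hub
  have ha0 : 0 < a := lt_trans hv hva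
  set F := conv f ω with hF
  set S : Set ℝ := {x | v ≤ F x} with hS
  have hFmono : Monotone F := conv_mono hω hf hf01
  have hne : S.Nonempty := by
    have hv1 : v < 1 := lt_of_lt_of_le hva ha1
    obtain ⟨x, hx⟩ :=
      ((conv_tendsto_atTop hω hf hf01 hf1).eventually (eventually_gt_nhds hv1)).exists
    exact ⟨x, hx.le⟩
  have hbdd : BddBelow S := by
    obtain ⟨x0, hx0⟩ :=
      ((conv_tendsto_atBot hω hf hf01 hf0).eventually (eventually_lt_nhds hv)).exists
    refine ⟨x0, fun x hx => ?_⟩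
    by_contra hlt
    push_neg at hlt
    exact absurd (le_trans hx (hFmono hlt.le)) (not_le.mpr hx0)
  set s := sInf S with hs
  have hA : ∀ x, s < x → b ≤ g x := by
    intro x hx
    obtain ⟨x', hx', hx'x⟩ := (csInf_lt_iff hbdd hne).mp hx
    exact hcons1 x (le_trans hx' (hFmono hx'x.le))
  set I2 := OmgInv ω (u / b) with hI2
  have hB : ∀ y, b * Omg ω (y - s) ≤ conv g ω y :=
    fun y => conv_ge hω hg hg01 s b hb0.le hA y
  have hC : ∀ x, s - α + I2 < x → a ≤ f x := by
    intro x hx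
    have h1 : I2 < x + α - s := by linarith
    have h2 : u / b < Omg ω (x + α - s) :=
      omgInv_lt hω (by rw [div_lt_one hb0]; exact hub) h1
    have h3 : u < b * Omg ω (x + α - s) := by
      have := (div_lt_iff₀ hb0).mp h2
      nlinarith
    exact hcons2 x (le_trans h3.le (hB (x + α)))
  set I1 := OmgInv ω (v / a) with hI1
  have hD : ∀ y, a * Omg ω (y - (s - α + I2)) ≤ F y :=
    fun y => conv_ge hω hf hf01 _ a ha0.le hC y
  by_contra hcon
  push_neg at hcon
  set y := ((s - α + I2 + I1) + s) / 2 with hy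
  have hy1 : s - α + I2 + I1 < y := by
    simp only [hy]; linarith
  have hy2 : y < s := by
    simp only [hy]; linarith
  have h5 : v / a < Omg ω (y - (s - α + I2)) :=
    omgInv_lt hω (by rw [div_lt_one ha0]; exact hva) (by linarith)
  have h6 : v < a * Omg ω (y - (s - α + I2)) := by
    have := (div_lt_iff₀ ha0).mp h5
    nlinarith
  have h7 : y ∈ S := le_trans h6.le (hD y)
  exact absurd (csInf_le hbdd h7) (not_le.mpr hy2)

lemma lm_mono {h : ℝ → ℝ} (hh : MemX h) {w w' : ℝ} (hw : w ≤ w') (hw1 : w' ≤ 1) :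
    lm h w ≤ lm h w' := by
  have hbdd : BddAbove (h '' Ico 0 w') := by
    refine ⟨1, fun z hz => ?_⟩
    obtain ⟨t, ht, rfl⟩ := hz
    exact (hh.2 ⟨ht.1, le_trans ht.2.le hw1⟩).2
  unfold lm
  by_cases h0 : w ≤ 0
  · rw [if_pos h0]
    by_cases h0' : w' ≤ 0
    · rw [if_pos h0']
    · rw [if_neg h0']
      push_neg at h0'
      have hmem : h 0 ∈ h '' Ico 0 w' := ⟨0, ⟨le_refl 0, h0'⟩, rfl⟩
      exact le_trans (hh.2 ⟨le_refl 0, zero_le_one⟩).1 (le_csSup hbdd hmem)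
  · push_neg at h0
    rw [if_neg (not_le.mpr h0), if_neg (not_le.mpr (lt_of_lt_of_le h0 hw))]
    exact csSup_le_csSup hbdd ⟨h 0, 0, ⟨le_refl 0, h0⟩, rfl⟩
      (image_mono (Ico_subset_Ico_right hw))

lemma lm_le_one {h : ℝ → ℝ} (hh : MemX h) {w : ℝ} (hw1 : w ≤ 1) : lm h w ≤ 1 := by
  unfold lm
  split_ifs with h0
  · exact zero_le_one
  · push_neg at h0
    refine csSup_le ⟨h 0, 0, ⟨le_refl 0, h0⟩, rfl⟩ (fun z hz => ?_)
    obtain ⟨t, ht, rfl⟩ := hz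
    exact (hh.2 ⟨ht.1, le_trans ht.2.le hw1⟩).2

lemma rm_mono {h : ℝ → ℝ} (hh : MemX h) {w w' : ℝ} (h0 : 0 ≤ w) (hw : w ≤ w') :
    rm h w ≤ rm h w' := by
  have hbdd : BddBelow (h '' Ioc w 1) := by
    refine ⟨0, fun z hz => ?_⟩
    obtain ⟨t, ht, rfl⟩ := hz
    exact (hh.2 ⟨le_trans h0 ht.1.le, ht.2⟩).1
  unfold rm
  by_cases h1' : 1 ≤ w'
  · rw [if_pos h1']
    by_cases h1 : 1 ≤ w
    · rw [if_pos h1]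
    · rw [if_neg h1]
      push_neg at h1
      exact csInf_le_of_le hbdd ⟨1, ⟨h1, le_refl 1⟩, rfl⟩ (hh.2 ⟨zero_le_one, le_refl 1⟩).2
  · push_neg at h1'
    rw [if_neg (not_le.mpr h1'), if_neg (not_le.mpr (lt_of_le_of_lt hw h1'))]
    exact csInf_le_csInf hbdd ⟨h 1, 1, ⟨h1', le_refl 1⟩, rfl⟩
      (image_mono (Ioc_subset_Ioc_left hw))

lemma rm_nonneg {h : ℝ → ℝ} (hh : MemX h) {w : ℝ} (h0 : 0 ≤ w) : 0 ≤ rm h w := by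
  unfold rm
  split_ifs with h1
  · exact zero_le_one
  · push_neg at h1
    refine le_csInf ⟨h 1, 1, ⟨h1, le_refl 1⟩, rfl⟩ (fun z hz => ?_)
    obtain ⟨t, ht, rfl⟩ := hz
    exact (hh.2 ⟨le_trans h0 ht.1.le, ht.2⟩).1

lemma conv_reflect {ω f : ℝ → ℝ} (hω : IsAveragingKernel ω) (hf : Monotone f)
    (hf01 : ∀ x, f x ∈ Icc (0:ℝ) 1) (x : ℝ) :
    conv (fun y => 1 - f (-y)) ω x = 1 - conv f ω (-x) := by
  have hint1 : Integrable (fun y => ω (x - y)) := (ker_int hω).comp_sub_left x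
  have hint2 : Integrable (fun y => f (-y) * ω (x - y)) := by
    refine Integrable.bdd_mul hint1
      ((hf.measurable.comp measurable_neg).aestronglyMeasurable) (c := 1) (ae_of_all _ fun y => ?_)
    rw [Real.norm_eq_abs, abs_of_nonneg (hf01 _).1]
    exact (hf01 _).2
  unfold conv
  have hsplit : (fun y => (1 - f (-y)) * ω (x - y)) =
      fun y => ω (x - y) - f (-y) * ω (x - y) := by
    funext y; ring
  rw [hsplit, integral_sub hint1 hint2, integral_sub_left_eq_self ω volume x, ker_total hω]
  congr 1
  have heq : (fun y => f (-y) * ω (x - y)) =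
      fun y => (fun z => f z * ω (-x - z)) (-y) := by
    funext y
    simp only
    rw [show -x - -y = -(x - y) by ring, hω.1]
  rw [heq]
  exact integral_neg_eq_self (fun z => f z * ω (-x - z)) volume

end AuxProof

/-- **Upper bound on the shift.** -/
theorem shift_upper_bound
    (ω hf hg f g : ℝ → ℝ) (α : ℝ)
    (hω : IsAveragingKernel ω)
    (hhf : MemX hf) (hhg : MemX hg)
    (hfΨ : MemPsi f) (hgΨ : MemPsi g)
    (hfI : Interpolates f 0 1) (hgI : Interpolates g 0 1)
    (hwave : ConsistentWave hf hg f g ω α) :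
    (∀ u ∈ Icc (0:ℝ) 1, ∀ v ∈ Icc (0:ℝ) 1, v < lm hf u → u < lm hg v →
      α ≤ OmgInv ω (v / lm hf u) + OmgInv ω (u / lm hg v)) ∧
    (∀ u ∈ Icc (0:ℝ) 1, ∀ v ∈ Icc (0:ℝ) 1, rm hf u < v → rm hg v < u →
      -α ≤ OmgInv ω ((1 - v) / (1 - rm hf u)) +
        OmgInv ω ((1 - u) / (1 - rm hg v))) := by
  obtain ⟨hfm, hf01⟩ := hfΨ
  obtain ⟨hgm, hg01⟩ := hgΨ
  constructor
  · -- First part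
    intro u hu v hv huv1 huv2
    have hv0 : 0 < v := by
      by_contra hvn
      push_neg at hvn
      rw [lm, if_pos hvn] at huv2
      exact absurd huv2 (not_lt.mpr hu.1)
    have hu0 : 0 < u := by
      by_contra hun
      push_neg at hun
      rw [lm, if_pos hun] at huv1
      exact absurd huv1 (not_lt.mpr hv.1)
    refine core_shift (α := α) hω hfm hf01 hgm hg01 hfI.1 hfI.2 hv0 huv1
      (lm_le_one hhf hu.2) hu.1 huv2 (fun x hx => ?_) (fun x hx => ?_)
    · exact le_trans (lm_mono hhg hx (conv_le_one hω hfm hf01 x)) (hwave.2 x).1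
    · exact le_trans (lm_mono hhf hx (conv_le_one hω hgm hg01 (x + α))) (hwave.1 x).1
  · -- Second part, via reflection
    intro u hu v hv huv1 huv2
    have hv1 : v < 1 := by
      by_contra hvn
      push_neg at hvn
      rw [rm, if_pos hvn] at huv2
      exact absurd huv2 (not_lt.mpr hu.2)
    have hu1 : u < 1 := by
      by_contra hun
      push_neg at hun
      rw [rm, if_pos hun] at huv1
      exact absurd huv1 (not_lt.mpr hv.2)
    set f' : ℝ → ℝ := fun x => 1 - f (-x) with hf'
    set g' : ℝ → ℝ := fun x => 1 - g (-x) with hg'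
    have hf'm : Monotone f' := by
      intro x y hxy
      simp only [hf']
      have := hfm (neg_le_neg hxy)
      linarith
    have hg'm : Monotone g' := by
      intro x y hxy
      simp only [hg']
      have := hgm (neg_le_neg hxy)
      linarith
    have hf'01 : ∀ x, f' x ∈ Icc (0:ℝ) 1 := by
      intro x
      have := hf01 (-x)
      exact ⟨by simp only [hf']; linarith [this.2], by simp only [hf']; linarith [this.1]⟩
    have hg'01 : ∀ x, g' x ∈ Icc (0:ℝ) 1 := by
      intro x
      have := hg01 (-x)
      exact ⟨by simp only [hg']; linarith [this.2], by simp only [hg']; linarith [this.1]⟩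
    have hf'0 : Tendsto f' atBot (nhds 0) := by
      have h1 : Tendsto (fun x : ℝ => f (-x)) atBot (nhds 1) :=
        hfI.2.comp tendsto_neg_atBot_atTop
      have h2 := h1.const_sub 1
      simpa using h2
    have hf'1 : Tendsto f' atTop (nhds 1) := by
      have h1 : Tendsto (fun x : ℝ => f (-x)) atTop (nhds 0) :=
        hfI.1.comp tendsto_neg_atTop_atBot
      have h2 := h1.const_sub 1
      simpa using h2
    have hcf : ∀ x, conv f' ω x = 1 - conv f ω (-x) := conv_reflect hω hfm hf01
    have hcg : ∀ x, conv g' ω x = 1 - conv g ω (-x) := conv_reflect hω hgm hg01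
    have hcons1 : ∀ x, 1 - v ≤ conv f' ω x → 1 - rm hg v ≤ g' x := by
      intro x hx
      rw [hcf x] at hx
      have hFle : conv f ω (-x) ≤ v := by linarith
      have h1 : g (-x) ≤ rm hg (conv f ω (-x)) := (hwave.2 (-x)).2
      have h2 : rm hg (conv f ω (-x)) ≤ rm hg v :=
        rm_mono hhg (conv_nonneg' hω hf01 (-x)) hFle
      simp only [hg']
      linarith
    have hcons2 : ∀ x, 1 - u ≤ conv g' ω (x + -α) → 1 - rm hf u ≤ f' x := by
      intro x hx
      rw [hcg (x + -α)] at hx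
      have hGle : conv g ω (-x + α) ≤ u := by
        have : -(x + -α) = -x + α := by ring
        rw [this] at hx
        linarith
      have h1 : f (-x) ≤ rm hf (conv g ω (-x + α)) := (hwave.1 (-x)).2
      have h2 : rm hf (conv g ω (-x + α)) ≤ rm hf u :=
        rm_mono hhf (conv_nonneg' hω hg01 (-x + α)) hGle
      simp only [hf']
      linarith
    have hkey := core_shift (α := -α) hω hf'm hf'01 hg'm hg'01 hf'0 hf'1
      (by linarith : (0:ℝ) < 1 - v)
      (by linarith : 1 - v < 1 - rm hf u)
      (by linarith [rm_nonneg hhf hu.1] : 1 - rm hf u ≤ 1)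
      (by linarith : (0:ℝ) ≤ 1 - u)
      (by linarith : 1 - u < 1 - rm hg v)
      hcons1 hcons2
    exact hkey
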